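/- Let γ, β₁ be reals with 0 < γ ≤ β₁, let β : ℝ → ℝ satisfy β(t) ≥ β₁ for all t, and let S : ℝ → ℝ be differentiable with S'(t) = (1 − S(t))(γ − β(t)S(t)) for all t. If 0 ≤ S(t₀) ≤ γ/β₁ for some t₀, then 0 ≤ S(t) ≤ γ/β₁ for all t ≥ t₀; that is, the interval [0, γ/β₁] is positively invariant for the susceptible-fraction dynamics. -/

import Mathlib

open Set

/-- If `S a ≤ c` and the derivative of `S` is nonpositive whenever `S > c` on `(a, b]`,
then `S b ≤ c`. -/
lemma aux_stay_le {S f : ℝ → ℝ} (hS : ∀ t, HasDerivAt S (f t) t)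
    {a b c : ℝ} (hab : a ≤ b) (ha : S a ≤ c)
    (hd : ∀ t, a < t → t ≤ b → c < S t → f t ≤ 0) : S b ≤ c := by
  by_contra h
  push_neg at h
  have hcont : Continuous S := by
    rw [continuous_iff_continuousAt]
    exact fun x => (hS x).continuousAt
  set A : Set ℝ := Icc a b ∩ {s | S s ≤ c} with hA
  have hAne : A.Nonempty := ⟨a, ⟨le_refl a, hab⟩, ha⟩
  have hAcl : IsClosed A := isClosed_Icc.inter (isClosed_le hcont continuous_const)
  have hAbdd : BddAbove A := ⟨b, fun x hx => hx.1.2⟩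
  set m := sSup A with hm
  have hmA : m ∈ A := hAcl.csSup_mem hAne hAbdd
  have hma : a ≤ m := hmA.1.1
  have hmb : m ≤ b := hmA.1.2
  have hmltb : m < b := lt_of_le_of_ne hmb (fun he => absurd (he ▸ hmA.2) (not_le.2 h))
  have hgt : ∀ s, m < s → s ≤ b → c < S s := by
    intro s hs1 hs2
    by_contra hsc
    push_neg at hsc
    exact absurd (le_csSup hAbdd (⟨⟨le_trans hma hs1.le, hs2⟩, hsc⟩ : s ∈ A)) (not_le.2 hs1)
  have hanti : AntitoneOn S (Icc m b) := by
    apply antitoneOn_of_deriv_nonpos (convex_Icc m b) hcont.continuousOn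
    · exact fun x _ => (hS x).differentiableAt.differentiableWithinAt
    · intro x hx
      rw [interior_Icc] at hx
      rw [(hS x).deriv]
      exact hd x (lt_of_le_of_lt hma hx.1) hx.2.le (hgt x hx.1 hx.2.le)
  have : S b ≤ S m := hanti ⟨le_refl m, hmb⟩ ⟨hmb, le_refl b⟩ hmb
  exact absurd (le_trans this hmA.2) (not_le.2 h)

/-- If `c < S a` and the derivative of `S` is nonnegative whenever `S > c` on `(a, b)`,
then `c < S b`. -/
lemma aux_persist_gt {S f : ℝ → ℝ} (hS : ∀ t, HasDerivAt S (f t) t)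
    {a b c : ℝ} (hab : a ≤ b) (ha : c < S a)
    (hd : ∀ t, a < t → t < b → c < S t → 0 ≤ f t) : c < S b := by
  by_contra h
  push_neg at h
  have hcont : Continuous S := by
    rw [continuous_iff_continuousAt]
    exact fun x => (hS x).continuousAt
  set A : Set ℝ := Icc a b ∩ {s | S s ≤ c} with hA
  have hAne : A.Nonempty := ⟨b, ⟨hab, le_refl b⟩, h⟩
  have hAcl : IsClosed A := isClosed_Icc.inter (isClosed_le hcont continuous_const)
  have hAbdd : BddBelow A := ⟨a, fun x hx => hx.1.1⟩
  set r := sInf A with hr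
  have hrA : r ∈ A := hAcl.csInf_mem hAne hAbdd
  have hra : a ≤ r := hrA.1.1
  have hrb : r ≤ b := hrA.1.2
  have haltr : a < r := lt_of_le_of_ne hra (fun he => absurd (he ▸ ha) (not_lt.2 hrA.2))
  have hgt : ∀ s, a ≤ s → s < r → c < S s := by
    intro s hs1 hs2
    by_contra hsc
    push_neg at hsc
    exact absurd (csInf_le hAbdd (⟨⟨hs1, le_trans hs2.le hrb⟩, hsc⟩ : s ∈ A)) (not_le.2 hs2)
  have hmono : MonotoneOn S (Icc a r) := by
    apply monotoneOn_of_deriv_nonneg (convex_Icc a r) hcont.continuousOn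
    · exact fun x _ => (hS x).differentiableAt.differentiableWithinAt
    · intro x hx
      rw [interior_Icc] at hx
      rw [(hS x).deriv]
      exact hd x hx.1 (lt_of_lt_of_le hx.2 hrb) (hgt x hx.1.le hx.2)
  have : S a ≤ S r := hmono ⟨le_refl a, hra⟩ ⟨hra, le_refl r⟩ hra
  have hrc : S r ≤ c := hrA.2
  linarith

/-- Under the SIS dynamics, a globally defined solution satisfies `S t ≤ 1` everywhere:
otherwise it would blow up in finite time. -/
lemma aux_le_one (γ β₁ : ℝ) (hγ : 0 < γ) (hγβ : γ ≤ β₁)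
    (β S : ℝ → ℝ) (hβ : ∀ t, β₁ ≤ β t)
    (hS : ∀ t, HasDerivAt S ((1 - S t) * (γ - β t * S t)) t) :
    ∀ t, S t ≤ 1 := by
  by_contra h
  push_neg at h
  obtain ⟨t₁, ht₁⟩ := h
  have hβ₁ : 0 < β₁ := lt_of_lt_of_le hγ hγβ
  -- S stays above 1 forever after t₁
  have h1 : ∀ t, t₁ ≤ t → 1 < S t := by
    intro t ht
    refine aux_persist_gt hS ht ht₁ ?_
    intro s _ _ hs
    have hb := hβ s
    have h2 : β₁ * S s ≤ β s * S s := mul_le_mul_of_nonneg_right hb (by linarith)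
    have h3 : γ ≤ β s * S s := by
      nlinarith [mul_nonneg (lt_of_lt_of_le hγ hγβ).le (by linarith : (0:ℝ) ≤ S s - 1)]
    nlinarith [mul_nonneg (by linarith : (0:ℝ) ≤ S s - 1)
      (by linarith : (0:ℝ) ≤ β s * S s - γ)]
  -- consider v = (S - 1)⁻¹ + β₁ * t, which is antitone on [t₁, ∞)
  set v : ℝ → ℝ := fun t => (S t - 1)⁻¹ + β₁ * t with hv
  have hvderiv : ∀ x, t₁ ≤ x →
      HasDerivAt v (-((1 - S x) * (γ - β x * S x)) / (S x - 1) ^ 2 + β₁) x := by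
    intro x hx
    have hne : S x - 1 ≠ 0 := ne_of_gt (sub_pos.2 (h1 x hx))
    have h1' : HasDerivAt (fun t => (S t - 1)⁻¹)
        (-((1 - S x) * (γ - β x * S x)) / (S x - 1) ^ 2) x :=
      ((hS x).sub_const 1).inv hne
    have h2 := h1'.add ((hasDerivAt_id x).const_mul β₁)
    rw [mul_one] at h2
    exact h2
  have hanti : AntitoneOn v (Ici t₁) := by
    apply antitoneOn_of_deriv_nonpos (convex_Ici t₁)
    · exact fun x hx => (hvderiv x hx).continuousAt.continuousWithinAt
    · intro x hx
      rw [interior_Ici] at hx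
      exact (hvderiv x (le_of_lt hx)).differentiableAt.differentiableWithinAt
    · intro x hx
      rw [interior_Ici] at hx
      rw [(hvderiv x hx.le).deriv]
      have hSx : 1 < S x := h1 x hx.le
      have hu : 0 < S x - 1 := sub_pos.2 hSx
      have hsq : 0 < (S x - 1) ^ 2 := pow_pos hu 2
      rw [div_add' _ _ _ (ne_of_gt hsq), div_nonpos_iff]
      right
      refine ⟨?_, hsq.le⟩
      have hb := hβ x
      have h2 : β₁ * S x ≤ β x * S x := mul_le_mul_of_nonneg_right hb (by linarith)
      have hkey : β₁ * (S x - 1) ≤ β x * S x - γ := by linarith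
      nlinarith [mul_le_mul_of_nonneg_left hkey hu.le]
  -- derive the contradiction at a large enough time
  have hu₁pos : 0 < (S t₁ - 1)⁻¹ := inv_pos.2 (sub_pos.2 ht₁)
  have hTge : t₁ ≤ t₁ + ((S t₁ - 1)⁻¹ + 1) / β₁ := by
    have : 0 ≤ ((S t₁ - 1)⁻¹ + 1) / β₁ := div_nonneg (by linarith) hβ₁.le
    linarith
  have hvT : v (t₁ + ((S t₁ - 1)⁻¹ + 1) / β₁) ≤ v t₁ := hanti (self_mem_Ici) hTge hTge
  have hβT : β₁ * (t₁ + ((S t₁ - 1)⁻¹ + 1) / β₁) = β₁ * t₁ + ((S t₁ - 1)⁻¹ + 1) := by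
    field_simp
  have hST : 1 < S (t₁ + ((S t₁ - 1)⁻¹ + 1) / β₁) := h1 _ hTge
  have hinvpos : 0 < (S (t₁ + ((S t₁ - 1)⁻¹ + 1) / β₁) - 1)⁻¹ :=
    inv_pos.2 (sub_pos.2 hST)
  simp only [hv] at hvT
  rw [hβT] at hvT
  linarith

/-- SIS positive invariance: if `0 < γ ≤ β₁`, `β(t) ≥ β₁` for all `t`, and
`S' = (1 - S)(γ - β(t)S)`, then the interval `[0, γ/β₁]` is positively invariant:
once `S(t₀) ∈ [0, γ/β₁]`, we have `S(t) ∈ [0, γ/β₁]` for all `t ≥ t₀`. -/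
theorem sis_positively_invariant (γ β₁ : ℝ) (hγ : 0 < γ) (hγβ : γ ≤ β₁)
    (β S : ℝ → ℝ) (hβ : ∀ t, β₁ ≤ β t)
    (hS : ∀ t, HasDerivAt S ((1 - S t) * (γ - β t * S t)) t)
    (t₀ : ℝ) (h0 : 0 ≤ S t₀) (h1 : S t₀ ≤ γ / β₁) :
    ∀ t, t₀ ≤ t → 0 ≤ S t ∧ S t ≤ γ / β₁ := by
  have hβ₁ : 0 < β₁ := lt_of_lt_of_le hγ hγβ
  have hle1 : ∀ t, S t ≤ 1 := aux_le_one γ β₁ hγ hγβ β S hβ hS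
  intro t ht
  constructor
  · -- lower bound, via the negated function
    have hneg : ∀ s, HasDerivAt (fun r => -S r) (-((1 - S s) * (γ - β s * S s))) s :=
      fun s => (hS s).neg
    have := aux_stay_le hneg ht (by linarith : -S t₀ ≤ 0) ?_
    · linarith
    · intro s _ _ hs
      have hSs : S s < 0 := by linarith
      have hb := hβ s
      have h2 : β s * S s ≤ β₁ * S s := mul_le_mul_of_nonpos_right hb hSs.le
      have h3 : β₁ * S s ≤ 0 := mul_nonpos_of_nonneg_of_nonpos hβ₁.le hSs.le
      have h4 : (0:ℝ) ≤ 1 - S s := by linarith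
      have h5 : (0:ℝ) ≤ γ - β s * S s := by linarith
      exact neg_nonpos.2 (mul_nonneg h4 h5)
  · -- upper bound
    refine aux_stay_le hS ht h1 ?_
    intro s _ _ hs
    have hcpos : 0 < γ / β₁ := div_pos hγ hβ₁
    have hSpos : 0 < S s := lt_trans hcpos hs
    have h1s : S s ≤ 1 := hle1 s
    have hkey : γ < β s * S s := by
      have h2 : β₁ * (γ / β₁) < β₁ * S s := by
        exact mul_lt_mul_of_pos_left hs hβ₁
      rw [mul_div_cancel₀ _ (ne_of_gt hβ₁)] at h2
      calc γ < β₁ * S s := h2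
        _ ≤ β s * S s := mul_le_mul_of_nonneg_right (hβ s) hSpos.le
    exact mul_nonpos_of_nonneg_of_nonpos (by linarith) (by linarith)
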